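/- Let p be an odd prime, ζ a primitive p-th root of unity, and 𝔭 = (1 − ζ) ⊂ ℤ[ζ]. If x ∈ ℤ[ζ] satisfies x ≡ 1 (mod 𝔭), then N_{ℚ(ζ)/ℚ}((x − 1)^p + 2 − ζ) ≡ 2^p − 1 (mod p²) as integers. -/

import Mathlib

open NumberField Polynomial Finset

lemma norm_two_sub_zeta {p : ℕ+} [hp : Fact (p : ℕ).Prime] {K : Type*} [Field K] [Algebra ℚ K]
    [IsCyclotomicExtension {(p : ℕ)} ℚ K] {ζ : K} (hζ : IsPrimitiveRoot ζ (p : ℕ)) :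
    Algebra.norm ℚ (2 - ζ) = ((2 ^ (p : ℕ) - 1 : ℤ) : ℚ) := by
  have hirr := cyclotomic.irreducible_rat (n := p) p.pos
  haveI := IsCyclotomicExtension.neZero' p ℚ K
  let E := AlgebraicClosure K
  obtain ⟨z, hz⟩ := IsAlgClosed.exists_root (cyclotomic p E)
    (degree_cyclotomic_pos p E p.pos).ne.symm
  apply (algebraMap ℚ E).injective
  letI := IsCyclotomicExtension.finiteDimensional {(p : ℕ)} ℚ K
  letI := IsCyclotomicExtension.isGalois {(p : ℕ)} ℚ K
  rw [Algebra.norm_eq_prod_embeddings]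
  have Hprod : (Finset.univ.prod fun σ : K →ₐ[ℚ] E => (2 - σ ζ)) =
      eval 2 (cyclotomic' p E) := by
    rw [cyclotomic', eval_prod, ← Finset.prod_attach (s := primitiveRoots (p : ℕ) E),
      ← Finset.univ_eq_attach]
    refine Fintype.prod_equiv (hζ.embeddingsEquivPrimitiveRoots E hirr) _ _ fun σ => ?_
    simp
  have H2 : (Finset.univ.prod fun σ : K →ₐ[ℚ] E => σ (2 - ζ)) = eval 2 (cyclotomic' p E) := by
    rw [← Hprod]
    exact Finset.prod_congr rfl fun σ _ => by rw [map_sub, map_ofNat]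
  haveI : NeZero ((p : ℕ) : E) := NeZero.of_faithfulSMul ℚ _ (p : ℕ)
  rw [H2, cyclotomic', ← cyclotomic_eq_prod_X_sub_primitiveRoots (isRoot_cyclotomic_iff.1 hz),
    ← map_cyclotomic_int]
  have heval : eval 2 (cyclotomic (p : ℕ) ℤ) = 2 ^ (p : ℕ) - 1 := by
    rw [cyclotomic_prime ℤ (p : ℕ)]
    simp [eval_geom_sum]
    have := geom_sum_mul (2 : ℤ) (p : ℕ)
    simpa using this
  have hfin : eval (2 : E) (map (Int.castRingHom E) (cyclotomic (p : ℕ) ℤ)) =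
      ((eval 2 (cyclotomic (p : ℕ) ℤ) : ℤ) : E) := by
    rw [show (2 : E) = ((2 : ℤ) : E) by norm_num, eval_intCast_map, eq_intCast]
    norm_num
  rw [hfin, heval]
  push_cast
  simp
theorem norm_phi_congr (p : ℕ+) (hp : Fact (p : ℕ).Prime) (hodd : Odd (p : ℕ))
    (K : Type*) [Field K] [Algebra ℚ K] [IsCyclotomicExtension {(p : ℕ)} ℚ K]
    (ζ : 𝓞 K) (hζ : IsPrimitiveRoot ζ (p : ℕ))
    (x : 𝓞 K) (hx : x - 1 ∈ Ideal.span {1 - ζ}) :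
    (Algebra.norm ℤ ((x - 1) ^ (p : ℕ) + 2 - ζ)) ≡ 2 ^ (p : ℕ) - 1 [ZMOD ((p : ℤ) ^ 2)] := by
  have hp' := hp.out
  haveI : NumberField K := IsCyclotomicExtension.numberField {(p : ℕ)} ℚ K
  haveI := IsCyclotomicExtension.isGalois {(p : ℕ)} ℚ K
  have hinj : Function.Injective (algebraMap (𝓞 K) K) :=
    NumberField.RingOfIntegers.coe_injective
  have hζK : IsPrimitiveRoot (algebraMap (𝓞 K) K ζ) (p : ℕ) := hζ.map_of_injective hinj
  have hp2 : p ≠ 2 := by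
    intro h
    rw [h] at hodd
    exact (by decide : ¬ Odd ((2 : ℕ+) : ℕ)) hodd
  have hirr := Polynomial.cyclotomic.irreducible_rat (n := p) p.pos
  haveI : NeZero (p : ℕ) := ⟨hp'.ne_zero⟩
  have coeNorm : ∀ c : 𝓞 K, algebraMap ℤ ℚ (Algebra.norm ℤ c) =
      Algebra.norm ℚ ((algebraMap (𝓞 K) K) c) := fun c =>
    (Algebra.norm_localization (R := ℤ) (Rₘ := ℚ) (S := 𝓞 K) (Sₘ := K)
      (nonZeroDivisors ℤ) c).symm
  have coeNorm' : ∀ c : 𝓞 K, ((Algebra.norm ℤ c : ℤ) : ℚ) =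
      Algebra.norm ℚ ((algebraMap (𝓞 K) K) c) := fun c => by
    rw [← coeNorm c]; simp [algebraMap_int_eq]
  set a : 𝓞 K := (x - 1) ^ (p : ℕ) + 2 - ζ with ha
  set b : 𝓞 K := 2 - ζ with hb
  set π : 𝓞 K := ζ - 1 with hπ
  -- π divides x - 1
  have hπx : π ∣ x - 1 := by
    rw [Ideal.mem_span_singleton, show (1 : 𝓞 K) - ζ = -π by rw [hπ]; ring, neg_dvd] at hx
    exact hx
  set res := galRestrict ℤ ℚ K (𝓞 K) with hres
  -- π divides every conjugate of π
  have hπσ : ∀ σ : K ≃ₐ[ℚ] K, π ∣ (res σ) π := by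
    intro σ
    have hpow : ((res σ) ζ) ^ (p : ℕ) = 1 := by rw [← map_pow, hζ.pow_eq_one, map_one]
    obtain ⟨i, -, hi⟩ := hζ.eq_pow_of_pow_eq_one hpow
    have h1 : (res σ) π = ζ ^ i - 1 := by rw [hπ, map_sub, map_one, hi]
    rw [h1, ← geom_sum_mul]
    exact dvd_mul_left _ _
  -- key congruence modulo π ^ p
  have key : ∀ σ : K ≃ₐ[ℚ] K, π ^ (p : ℕ) ∣ (res σ) a - (res σ) b := by
    intro σ
    have hab : a - b = (x - 1) ^ (p : ℕ) := by rw [ha, hb]; ring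
    have h2 : (res σ) a - (res σ) b = ((res σ) (x - 1)) ^ (p : ℕ) := by
      rw [← map_sub, hab, map_pow]
    rw [h2]
    apply pow_dvd_pow_of_dvd
    obtain ⟨y, hy⟩ := hπx
    rw [hy, map_mul]
    exact (hπσ σ).mul_right _
  -- norm as product of conjugates
  have hnorm : ∀ c : 𝓞 K, algebraMap ℤ (𝓞 K) (Algebra.norm ℤ c) =
      ∏ σ : K ≃ₐ[ℚ] K, (res σ) c := by
    intro c
    rw [hres, prod_galRestrict_eq_norm ℤ ℚ K (𝓞 K) c]
    congr 1
    apply IsFractionRing.injective ℤ ℚ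
    rw [IsIntegralClosure.algebraMap_mk']
    exact coeNorm c
  -- the norm difference lies in (π ^ p)
  have hmem : π ^ (p : ℕ) ∣ algebraMap ℤ (𝓞 K) (Algebra.norm ℤ a - Algebra.norm ℤ b) := by
    rw [map_sub, hnorm a, hnorm b, ← Ideal.mem_span_singleton, ← Ideal.Quotient.eq,
      map_prod, map_prod]
    exact Finset.prod_congr rfl fun σ _ =>
      Ideal.Quotient.eq.mpr (Ideal.mem_span_singleton.mpr (key σ))
  set n : ℤ := Algebra.norm ℤ a - Algebra.norm ℤ b with hn
  obtain ⟨z, hz⟩ := hmem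
  -- norm of π is p
  have hNπ : Algebra.norm ℤ π = (p : ℤ) := by
    have h1 : Algebra.norm ℚ ((algebraMap (𝓞 K) K) π) = (p : ℚ) := by
      rw [hπ, map_sub, map_one]
      exact hζK.norm_sub_one_of_prime_ne_two' hirr (fun h => hp2 (PNat.coe_injective h))
    have h2 := coeNorm' π
    rw [h1] at h2
    exact_mod_cast h2
  have hQK : Module.finrank ℚ K = (p : ℕ) - 1 := by
    rw [IsCyclotomicExtension.finrank K hirr, Nat.totient_prime hp']
  have hrank : Module.finrank ℤ (𝓞 K) = (p : ℕ) - 1 := by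
    rw [NumberField.RingOfIntegers.rank]
    convert hQK using 2
    exact Subsingleton.elim _ _
  have hcard : Fintype.card (Module.Free.ChooseBasisIndex ℤ (𝓞 K)) = (p : ℕ) - 1 := by
    rw [← Module.finrank_eq_card_chooseBasisIndex, hrank]
  have heq : n ^ ((p : ℕ) - 1) = (p : ℤ) ^ (p : ℕ) * Algebra.norm ℤ z := by
    have h3 := congrArg (Algebra.norm ℤ) hz
    rwa [Algebra.norm_algebraMap_of_basis (NumberField.RingOfIntegers.basis K), hcard,
      map_mul, map_pow, hNπ] at h3
  have hpZ : Prime (p : ℤ) := Nat.prime_iff_prime_int.1 hp'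
  have hp0 : (p : ℕ) ≠ 0 := hp'.ne_zero
  have hdvd1 : (p : ℤ) ∣ n := by
    apply hpZ.dvd_of_dvd_pow (n := (p : ℕ) - 1)
    rw [heq]
    exact Dvd.dvd.mul_right (dvd_pow_self _ hp0) _
  obtain ⟨m, hm⟩ := hdvd1
  have hps : (p : ℕ) - 1 + 1 = (p : ℕ) := Nat.succ_pred_eq_of_pos hp'.pos
  have hsplit : (p : ℤ) ^ (p : ℕ) = (p : ℤ) ^ ((p : ℕ) - 1) * (p : ℤ) := by
    rw [← pow_succ, hps]
  have hcancel : m ^ ((p : ℕ) - 1) = (p : ℤ) * Algebra.norm ℤ z := by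
    have hppow : ((p : ℤ)) ^ ((p : ℕ) - 1) ≠ 0 :=
      pow_ne_zero _ (by exact_mod_cast hp0)
    apply mul_left_cancel₀ hppow
    rw [← mul_pow, ← hm, heq, hsplit]
    ring
  have hdvd2 : (p : ℤ) ∣ m := by
    apply hpZ.dvd_of_dvd_pow (n := (p : ℕ) - 1)
    rw [hcancel]
    exact Dvd.intro _ rfl
  obtain ⟨m', hm'⟩ := hdvd2
  have hfinal : (p : ℤ) ^ 2 ∣ n := ⟨m', by rw [hm, hm']; ring⟩
  -- norm of b
  have hNb : Algebra.norm ℤ b = 2 ^ (p : ℕ) - 1 := by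
    have h1 : Algebra.norm ℚ ((algebraMap (𝓞 K) K) b) = ((2 ^ (p : ℕ) - 1 : ℤ) : ℚ) := by
      rw [hb, map_sub, map_ofNat]
      exact norm_two_sub_zeta hζK
    have h2 := coeNorm' b
    rw [h1] at h2
    exact_mod_cast h2
  have hmod : Algebra.norm ℤ b ≡ Algebra.norm ℤ a [ZMOD ((p : ℤ) ^ 2)] :=
    Int.modEq_iff_dvd.mpr hfinal
  rw [hNb] at hmod
  exact hmod.symm
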